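/- Let V be a Stinespring isometry defining complementary channels Φ and Φc, and assume the channels are minimally defined, i.e. rank Φ(1_d) = dOut and rank Φc(1_d) = dEnv. Then: if dOut > dEnv and d > dOut·(dEnv − 1), there exists a density matrix ρ with S(Φ(ρ)) > S(Φc(ρ)); and if dEnv > dOut and d > dEnv·(dOut − 1), there exists a density matrix ρ with S(Φc(ρ)) > S(Φ(ρ)). -/

import Mathlib

open Matrix
open scoped ComplexOrder

/-- The channel defined by a Stinespring isometry `V`: partial trace over the environment. -/
noncomputable def phiOut {d dOut dEnv : ℕ} (V : Matrix (Fin dOut × Fin dEnv) (Fin d) ℂ)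
    (X : Matrix (Fin d) (Fin d) ℂ) : Matrix (Fin dOut) (Fin dOut) ℂ :=
  Matrix.of fun i k => ∑ j, (V * X * Vᴴ) (i, j) (k, j)

/-- The complementary channel defined by a Stinespring isometry `V`: partial trace over the
output. -/
noncomputable def phiEnv {d dOut dEnv : ℕ} (V : Matrix (Fin dOut × Fin dEnv) (Fin d) ℂ)
    (X : Matrix (Fin d) (Fin d) ℂ) : Matrix (Fin dEnv) (Fin dEnv) ℂ :=
  Matrix.of fun j l => ∑ i, (V * X * Vᴴ) (i, j) (i, l)

/-- Von Neumann entropy of a (Hermitian) matrix, via its eigenvalues. -/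
noncomputable def vnEntropy {n : ℕ} (M : Matrix (Fin n) (Fin n) ℂ) : ℝ :=
  if h : M.IsHermitian then -∑ i, h.eigenvalues i * Real.log (h.eigenvalues i) else 0

namespace StinespringAux3

/-! ### Partial traces -/

/-- Partial trace over the second (environment) factor. -/
noncomputable def ptrB {n m : ℕ} (N : Matrix (Fin n × Fin m) (Fin n × Fin m) ℂ) :
    Matrix (Fin n) (Fin n) ℂ :=
  Matrix.of fun i k => ∑ j, N (i, j) (k, j)

/-- Partial trace over the first (output) factor. -/
noncomputable def ptrA {n m : ℕ} (N : Matrix (Fin n × Fin m) (Fin n × Fin m) ℂ) :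
    Matrix (Fin m) (Fin m) ℂ :=
  Matrix.of fun j l => ∑ i, N (i, j) (i, l)

lemma ptrB_isHermitian {n m : ℕ} {N : Matrix (Fin n × Fin m) (Fin n × Fin m) ℂ}
    (hN : N.IsHermitian) : (ptrB N).IsHermitian := by
  ext i k
  simp only [conjTranspose_apply, ptrB, Matrix.of_apply, star_sum]
  exact Finset.sum_congr rfl fun j _ => hN.apply (i, j) (k, j)

lemma ptrA_isHermitian {n m : ℕ} {N : Matrix (Fin n × Fin m) (Fin n × Fin m) ℂ}
    (hN : N.IsHermitian) : (ptrA N).IsHermitian := by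
  ext j l
  simp only [conjTranspose_apply, ptrA, Matrix.of_apply, star_sum]
  exact Finset.sum_congr rfl fun i _ => hN.apply (i, j) (i, l)

lemma ptrB_quad {n m : ℕ} (N : Matrix (Fin n × Fin m) (Fin n × Fin m) ℂ) (x : Fin n → ℂ) :
    dotProduct (star x) (ptrB N *ᵥ x) =
      ∑ j : Fin m, dotProduct (star (fun p : Fin n × Fin m => if p.2 = j then x p.1 else 0))
        (N *ᵥ fun p : Fin n × Fin m => if p.2 = j then x p.1 else 0) := by
  have key : ∀ j : Fin m,
      dotProduct (star (fun p : Fin n × Fin m => if p.2 = j then x p.1 else 0))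
        (N *ᵥ fun p : Fin n × Fin m => if p.2 = j then x p.1 else 0)
      = ∑ i, ∑ k, star (x i) * (N (i, j) (k, j) * x k) := by
    intro j
    simp only [Matrix.mulVec, dotProduct, Pi.star_apply]
    rw [Fintype.sum_prod_type]
    refine Finset.sum_congr rfl fun i _ => ?_
    rw [Finset.sum_eq_single j]
    · have h2 : ∑ q : Fin n × Fin m, N (i, j) q * (if q.2 = j then x q.1 else 0)
          = ∑ k, N (i, j) (k, j) * x k := by
        rw [Fintype.sum_prod_type]
        refine Finset.sum_congr rfl fun k _ => ?_
        rw [Finset.sum_eq_single j]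
        · simp
        · intro j' _ hj'; simp [hj']
        · intro h; exact absurd (Finset.mem_univ j) h
      rw [h2, Finset.mul_sum]
      simp
    · intro j' _ hj'; simp [hj']
    · intro h; exact absurd (Finset.mem_univ j) h
  have swap3 : ∑ j : Fin m, ∑ i : Fin n, ∑ k : Fin n, star (x i) * (N (i, j) (k, j) * x k)
      = ∑ i : Fin n, star (x i) * ∑ k : Fin n, (∑ j : Fin m, N (i, j) (k, j)) * x k := by
    rw [Finset.sum_comm]
    refine Finset.sum_congr rfl fun i _ => ?_
    rw [Finset.mul_sum]
    rw [Finset.sum_comm]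
    refine Finset.sum_congr rfl fun k _ => ?_
    rw [Finset.sum_mul, Finset.mul_sum]
  have hL : dotProduct (star x) (ptrB N *ᵥ x)
      = ∑ i : Fin n, star (x i) * ∑ k : Fin n, (∑ j : Fin m, N (i, j) (k, j)) * x k := rfl
  rw [hL, Finset.sum_congr rfl fun j _ => key j, swap3]

lemma ptrA_quad {n m : ℕ} (N : Matrix (Fin n × Fin m) (Fin n × Fin m) ℂ) (x : Fin m → ℂ) :
    dotProduct (star x) (ptrA N *ᵥ x) =
      ∑ i : Fin n, dotProduct (star (fun p : Fin n × Fin m => if p.1 = i then x p.2 else 0))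
        (N *ᵥ fun p : Fin n × Fin m => if p.1 = i then x p.2 else 0) := by
  have key : ∀ i : Fin n,
      dotProduct (star (fun p : Fin n × Fin m => if p.1 = i then x p.2 else 0))
        (N *ᵥ fun p : Fin n × Fin m => if p.1 = i then x p.2 else 0)
      = ∑ j, ∑ l, star (x j) * (N (i, j) (i, l) * x l) := by
    intro i
    simp only [Matrix.mulVec, dotProduct, Pi.star_apply]
    rw [Fintype.sum_prod_type]
    rw [Finset.sum_eq_single i]
    · refine Finset.sum_congr rfl fun j _ => ?_
      have h2 : ∑ q : Fin n × Fin m, N (i, j) q * (if q.1 = i then x q.2 else 0)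
          = ∑ l, N (i, j) (i, l) * x l := by
        rw [Fintype.sum_prod_type]
        rw [Finset.sum_eq_single i]
        · simp
        · intro i' _ hi'; simp [hi']
        · intro h; exact absurd (Finset.mem_univ i) h
      rw [h2, Finset.mul_sum]
      simp
    · intro i' _ hi'; simp [hi']
    · intro h; exact absurd (Finset.mem_univ i) h
  have swap3 : ∑ i : Fin n, ∑ j : Fin m, ∑ l : Fin m, star (x j) * (N (i, j) (i, l) * x l)
      = ∑ j : Fin m, star (x j) * ∑ l : Fin m, (∑ i : Fin n, N (i, j) (i, l)) * x l := by
    rw [Finset.sum_comm]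
    refine Finset.sum_congr rfl fun j _ => ?_
    rw [Finset.mul_sum]
    rw [Finset.sum_comm]
    refine Finset.sum_congr rfl fun l _ => ?_
    rw [Finset.sum_mul, Finset.mul_sum]
  have hL : dotProduct (star x) (ptrA N *ᵥ x)
      = ∑ j : Fin m, star (x j) * ∑ l : Fin m, (∑ i : Fin n, N (i, j) (i, l)) * x l := rfl
  rw [hL, Finset.sum_congr rfl fun i _ => key i, swap3]

lemma ptrB_posSemidef {n m : ℕ} {N : Matrix (Fin n × Fin m) (Fin n × Fin m) ℂ}
    (hN : N.PosSemidef) : (ptrB N).PosSemidef := by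
  refine .of_dotProduct_mulVec_nonneg (ptrB_isHermitian hN.1) fun x => ?_
  rw [ptrB_quad]
  exact Finset.sum_nonneg fun j _ => hN.dotProduct_mulVec_nonneg _

lemma ptrA_posSemidef {n m : ℕ} {N : Matrix (Fin n × Fin m) (Fin n × Fin m) ℂ}
    (hN : N.PosSemidef) : (ptrA N).PosSemidef := by
  refine .of_dotProduct_mulVec_nonneg (ptrA_isHermitian hN.1) fun x => ?_
  rw [ptrA_quad]
  exact Finset.sum_nonneg fun i _ => hN.dotProduct_mulVec_nonneg _

lemma ptrB_sub {n m : ℕ} (M N : Matrix (Fin n × Fin m) (Fin n × Fin m) ℂ) :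
    ptrB (M - N) = ptrB M - ptrB N := by
  ext i k
  simp [ptrB, Finset.sum_sub_distrib]

lemma ptrB_smul {n m : ℕ} (c : ℂ) (N : Matrix (Fin n × Fin m) (Fin n × Fin m) ℂ) :
    ptrB (c • N) = c • ptrB N := by
  ext i k
  simp [ptrB, Finset.mul_sum]

lemma ptrA_smul {n m : ℕ} (c : ℂ) (N : Matrix (Fin n × Fin m) (Fin n × Fin m) ℂ) :
    ptrA (c • N) = c • ptrA N := by
  ext j l
  simp [ptrA, Finset.mul_sum]

lemma ptrB_one {n m : ℕ} :
    ptrB (1 : Matrix (Fin n × Fin m) (Fin n × Fin m) ℂ) = (m : ℂ) • 1 := by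
  ext i k
  simp only [ptrB, Matrix.of_apply, Matrix.one_apply, Matrix.smul_apply, Prod.mk.injEq]
  by_cases h : i = k
  · simp [h, Finset.sum_const]
  · simp [h]

lemma trace_ptrB {n m : ℕ} (N : Matrix (Fin n × Fin m) (Fin n × Fin m) ℂ) :
    (ptrB N).trace = N.trace := by
  simp only [ptrB, Matrix.trace, Matrix.diag, Matrix.of_apply, Fintype.sum_prod_type]

lemma trace_ptrA {n m : ℕ} (N : Matrix (Fin n × Fin m) (Fin n × Fin m) ℂ) :
    (ptrA N).trace = N.trace := by
  simp only [ptrA, Matrix.trace, Matrix.diag, Matrix.of_apply, Fintype.sum_prod_type]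
  exact (Finset.sum_comm).symm

/-! ### Basic matrix facts -/

lemma one_sub_proj_posSemidef {d' n m : ℕ} {V : Matrix (Fin n × Fin m) (Fin d') ℂ}
    (hV : Vᴴ * V = 1) :
    ((1 : Matrix (Fin n × Fin m) (Fin n × Fin m) ℂ) - V * Vᴴ).PosSemidef := by
  have hP : (V * Vᴴ) * (V * Vᴴ) = V * Vᴴ := by
    calc (V * Vᴴ) * (V * Vᴴ) = V * (Vᴴ * V) * Vᴴ := by
          simp only [Matrix.mul_assoc]
      _ = V * Vᴴ := by rw [hV, Matrix.mul_one]
  have hH : ((1 : Matrix (Fin n × Fin m) (Fin n × Fin m) ℂ) - V * Vᴴ)ᴴ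
      = 1 - V * Vᴴ := by
    simp [conjTranspose_sub, conjTranspose_mul]
  have h2 : ((1 : Matrix (Fin n × Fin m) (Fin n × Fin m) ℂ) - V * Vᴴ)ᴴ *
      (1 - V * Vᴴ) = 1 - V * Vᴴ := by
    rw [hH, sub_mul, one_mul, mul_sub, mul_one, hP, sub_self, sub_zero]
  rw [← h2]
  exact Matrix.posSemidef_conjTranspose_mul_self _

/-- Real nonneg scalar times a PSD matrix is PSD. -/
lemma posSemidef_realSmul {k : ℕ} {M : Matrix (Fin k) (Fin k) ℂ} (hM : M.PosSemidef)
    {c : ℝ} (hc : 0 ≤ c) : (((c : ℂ)) • M).PosSemidef := by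
  refine .of_dotProduct_mulVec_nonneg ?_ ?_
  · have h1 : Mᴴ = M := hM.1
    show (((c : ℂ)) • M)ᴴ = ((c : ℂ)) • M
    rw [conjTranspose_smul, h1]
    congr 1
    simp [Complex.star_def, Complex.conj_ofReal]
  · intro x
    rw [smul_mulVec, dotProduct_smul, smul_eq_mul]
    exact mul_nonneg (Complex.zero_le_real.mpr hc) (hM.dotProduct_mulVec_nonneg x)

/-! ### Eigenvalue facts -/

lemma eig_le_of_psd {k : ℕ} {A : Matrix (Fin k) (Fin k) ℂ} (hA : A.IsHermitian) {c : ℝ}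
    (h : (((c : ℂ)) • 1 - A).PosSemidef) (i : Fin k) : hA.eigenvalues i ≤ c := by
  have hnorm : ‖hA.eigenvectorBasis i‖ = 1 := hA.eigenvectorBasis.orthonormal.1 i
  have hinner : (inner ℂ (hA.eigenvectorBasis i) (hA.eigenvectorBasis i) : ℂ) = 1 := by
    rw [inner_self_eq_norm_sq_to_K, hnorm]
    norm_num
  have hv : dotProduct (star ⇑(hA.eigenvectorBasis i)) ⇑(hA.eigenvectorBasis i) = 1 := by
    rw [dotProduct_comm, ← EuclideanSpace.inner_eq_star_dotProduct]
    exact hinner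
  have hq : dotProduct (star ⇑(hA.eigenvectorBasis i)) ((((c : ℂ)) • 1 - A) *ᵥ
      ⇑(hA.eigenvectorBasis i)) = ((c - hA.eigenvalues i : ℝ) : ℂ) := by
    rw [sub_mulVec, smul_mulVec, one_mulVec, dotProduct_sub, dotProduct_smul,
      hA.mulVec_eigenvectorBasis, dotProduct_smul, hv]
    simp [smul_eq_mul, Complex.real_smul]
  have h0 := h.dotProduct_mulVec_nonneg ⇑(hA.eigenvectorBasis i)
  rw [hq] at h0
  have := Complex.zero_le_real.mp h0
  linarith

lemma eig_pos_of_rank {k : ℕ} {A : Matrix (Fin k) (Fin k) ℂ} (hA : A.PosSemidef)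
    (hr : A.rank = k) (i : Fin k) : 0 < hA.1.eigenvalues i := by
  rcases (hA.eigenvalues_nonneg i).lt_or_eq with h | h
  · exact h
  · exfalso
    have hcard : Fintype.card {j // hA.1.eigenvalues j ≠ 0} < Fintype.card (Fin k) :=
      Fintype.card_subtype_lt (x := i) (by simp [← h])
    rw [← hA.1.rank_eq_card_non_zero_eigs, hr, Fintype.card_fin] at hcard
    exact lt_irrefl _ hcard

lemma sum_eig_eq_one {k : ℕ} {A : Matrix (Fin k) (Fin k) ℂ} (hA : A.IsHermitian)
    (ht : A.trace = 1) : ∑ i, hA.eigenvalues i = 1 := by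
  have hu : (star (hA.eigenvectorUnitary : Matrix (Fin k) (Fin k) ℂ)) *
      (hA.eigenvectorUnitary : Matrix (Fin k) (Fin k) ℂ) = 1 :=
    Matrix.mem_unitaryGroup_iff'.mp (hA.eigenvectorUnitary).2
  have h1 : A.trace = ∑ i, (hA.eigenvalues i : ℂ) := by
    exact hA.trace_eq_sum_eigenvalues
  rw [ht] at h1
  have h2 : ((∑ i, hA.eigenvalues i : ℝ) : ℂ) = 1 := by
    push_cast
    exact h1.symm
  exact_mod_cast h2

/-! ### The real entropy comparison -/

lemma entropy_lt {n m : ℕ} (hm : 0 < m) (hmn : m < n) (a : Fin n → ℝ) (b : Fin m → ℝ)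
    (ha0 : ∀ i, 0 < a i) (ha1 : ∀ i, a i ≤ ((m : ℝ))⁻¹) (hasum : ∑ i, a i = 1)
    (hb0 : ∀ j, 0 ≤ b j) (hbsum : ∑ j, b j = 1) :
    -∑ j, b j * Real.log (b j) < -∑ i, a i * Real.log (a i) := by
  have hmR : (0 : ℝ) < m := by exact_mod_cast hm
  -- Step 1 : entropy of b is at most log m
  have step1 : -∑ j, b j * Real.log (b j) ≤ Real.log m := by
    have hterm : ∀ j, -(b j * Real.log (b j)) ≤ (m : ℝ)⁻¹ - b j + b j * Real.log m := by
      intro j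
      rcases (hb0 j).lt_or_eq with h0 | h0
      · have hlog : Real.log (((m : ℝ) * b j)⁻¹) ≤ ((m : ℝ) * b j)⁻¹ - 1 :=
          Real.log_le_sub_one_of_pos (by positivity)
        rw [Real.log_inv, Real.log_mul (ne_of_gt hmR) (ne_of_gt h0)] at hlog
        have h1 := mul_le_mul_of_nonneg_left hlog (le_of_lt h0)
        have h2 : b j * (((m : ℝ) * b j)⁻¹ - 1) = (m : ℝ)⁻¹ - b j := by
          field_simp
        nlinarith
      · rw [← h0]
        simpa using inv_nonneg.mpr (le_of_lt hmR)
    calc -∑ j, b j * Real.log (b j) = ∑ j, -(b j * Real.log (b j)) := by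
          rw [Finset.sum_neg_distrib]
      _ ≤ ∑ j, ((m : ℝ)⁻¹ - b j + b j * Real.log m) := Finset.sum_le_sum fun j _ => hterm j
      _ = (m : ℝ) * (m : ℝ)⁻¹ - 1 + Real.log m := by
          rw [Finset.sum_add_distrib, Finset.sum_sub_distrib, Finset.sum_const, ← Finset.sum_mul,
            hbsum, Finset.card_univ, Fintype.card_fin, nsmul_eq_mul, one_mul]
      _ = Real.log m := by
          rw [mul_inv_cancel₀ (ne_of_gt hmR)]
          ring
  -- Step 2 : entropy of a is strictly more than log m
  have step2 : Real.log m < -∑ i, a i * Real.log (a i) := by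
    have key : -∑ i, a i * Real.log (a i) - Real.log m
        = ∑ i, a i * (-Real.log ((m : ℝ) * a i)) := by
      have hterm : ∀ i : Fin n, a i * (-Real.log ((m : ℝ) * a i))
          = -(a i * Real.log (a i)) - Real.log m * a i := by
        intro i
        rw [Real.log_mul (ne_of_gt hmR) (ne_of_gt (ha0 i))]
        ring
      rw [Finset.sum_congr rfl fun i _ => hterm i, Finset.sum_sub_distrib,
        Finset.sum_neg_distrib, ← Finset.mul_sum, hasum, mul_one]
    have hma : ∀ i, (m : ℝ) * a i ≤ 1 := by
      intro i
      calc (m : ℝ) * a i ≤ (m : ℝ) * (m : ℝ)⁻¹ :=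
            mul_le_mul_of_nonneg_left (ha1 i) (le_of_lt hmR)
        _ = 1 := mul_inv_cancel₀ (ne_of_gt hmR)
    have hnonneg : ∀ i, 0 ≤ a i * (-Real.log ((m : ℝ) * a i)) := by
      intro i
      refine mul_nonneg (le_of_lt (ha0 i)) (neg_nonneg.mpr ?_)
      exact Real.log_nonpos (mul_nonneg (le_of_lt hmR) (le_of_lt (ha0 i))) (hma i)
    have hex : ∃ i, a i < (m : ℝ)⁻¹ := by
      by_contra hno
      push_neg at hno
      have heq : ∀ i : Fin n, a i = (m : ℝ)⁻¹ := fun i => le_antisymm (ha1 i) (hno i)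
      have hsum2 : (1 : ℝ) = n * (m : ℝ)⁻¹ := by
        rw [← hasum, Finset.sum_congr rfl fun i _ => heq i, Finset.sum_const,
          Finset.card_univ, Fintype.card_fin, nsmul_eq_mul]
      have hnR : (m : ℝ) < n := by exact_mod_cast hmn
      have : (m : ℝ) = n := by
        field_simp at hsum2
        linarith
      linarith
    obtain ⟨i0, hi0⟩ := hex
    have hpos : 0 < ∑ i, a i * (-Real.log ((m : ℝ) * a i)) := by
      refine Finset.sum_pos' (fun i _ => hnonneg i) ⟨i0, Finset.mem_univ _, ?_⟩
      refine mul_pos (ha0 i0) (neg_pos.mpr (Real.log_neg (mul_pos hmR (ha0 i0)) ?_))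
      calc (m : ℝ) * a i0 < (m : ℝ) * (m : ℝ)⁻¹ := (mul_lt_mul_iff_right₀ hmR).mpr hi0
        _ = 1 := mul_inv_cancel₀ (ne_of_gt hmR)
    linarith [key ▸ hpos]
  linarith

/-! ### The von Neumann entropy comparison -/

lemma vn_lt {n m : ℕ} (hm : 0 < m) (hmn : m < n)
    {A : Matrix (Fin n) (Fin n) ℂ} {B : Matrix (Fin m) (Fin m) ℂ}
    (hA : A.PosSemidef) (hB : B.PosSemidef) (hAtr : A.trace = 1) (hBtr : B.trace = 1)
    (hArank : A.rank = n) (hAle : (((((m : ℝ)⁻¹ : ℝ)) : ℂ) • 1 - A).PosSemidef) :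
    vnEntropy B < vnEntropy A := by
  rw [vnEntropy, vnEntropy, dif_pos hA.1, dif_pos hB.1]
  exact entropy_lt hm hmn _ _ (fun i => eig_pos_of_rank hA hArank i)
    (fun i => eig_le_of_psd hA.1 hAle i) (sum_eig_eq_one hA.1 hAtr)
    (fun j => hB.eigenvalues_nonneg j) (sum_eig_eq_one hB.1 hBtr)

/-! ### The main step -/

lemma main_step {d n m : ℕ} (hd : 0 < d) (hm : 0 < m) (hmn : m < n) (hm2d : m * m ≤ d)
    (W : Matrix (Fin n × Fin m) (Fin d) ℂ) (hW : Wᴴ * W = 1)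
    (hrank : (ptrB (W * (1 : Matrix (Fin d) (Fin d) ℂ) * Wᴴ)).rank = n) :
    vnEntropy (ptrA (W * ((((d : ℝ)⁻¹ : ℝ) : ℂ) • (1 : Matrix (Fin d) (Fin d) ℂ)) * Wᴴ)) <
      vnEntropy (ptrB (W * ((((d : ℝ)⁻¹ : ℝ) : ℂ) • (1 : Matrix (Fin d) (Fin d) ℂ)) * Wᴴ)) := by
  have hdR : (0 : ℝ) < d := by exact_mod_cast hd
  have hmR : (0 : ℝ) < m := by exact_mod_cast hm
  have hdC : (((d : ℝ)⁻¹ : ℝ) : ℂ) ≠ 0 := by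
    simp only [ne_eq, Complex.ofReal_eq_zero, inv_eq_zero]
    exact ne_of_gt hdR
  set ρ : Matrix (Fin d) (Fin d) ℂ := (((d : ℝ)⁻¹ : ℝ) : ℂ) • 1 with hρdef
  have hρpsd : ρ.PosSemidef := posSemidef_realSmul Matrix.PosSemidef.one (by positivity)
  have hρtr : ρ.trace = 1 := by
    rw [hρdef, Matrix.trace_smul, Matrix.trace_one, Fintype.card_fin, smul_eq_mul]
    rw [← Complex.ofReal_natCast, ← Complex.ofReal_mul, inv_mul_cancel₀ (ne_of_gt hdR)]
    norm_num
  have hpsdN : (W * ρ * Wᴴ).PosSemidef := hρpsd.mul_mul_conjTranspose_same W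
  have hApsd : (ptrB (W * ρ * Wᴴ)).PosSemidef := ptrB_posSemidef hpsdN
  have hBpsd : (ptrA (W * ρ * Wᴴ)).PosSemidef := ptrA_posSemidef hpsdN
  have htrN : (W * ρ * Wᴴ).trace = 1 := by
    rw [Matrix.trace_mul_cycle, hW, one_mul, hρtr]
  have hAtr : (ptrB (W * ρ * Wᴴ)).trace = 1 := by rw [trace_ptrB]; exact htrN
  have hBtr : (ptrA (W * ρ * Wᴴ)).trace = 1 := by rw [trace_ptrA]; exact htrN
  have hscale : W * ρ * Wᴴ = (((d : ℝ)⁻¹ : ℝ) : ℂ) • (W * (1 : Matrix (Fin d) (Fin d) ℂ) * Wᴴ) := by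
    rw [hρdef, Matrix.mul_smul, Matrix.smul_mul]
  have hA_eq : ptrB (W * ρ * Wᴴ) = (((d : ℝ)⁻¹ : ℝ) : ℂ) • ptrB (W * (1 : Matrix (Fin d) (Fin d) ℂ) * Wᴴ) := by
    rw [hscale, ptrB_smul]
  have hArank : (ptrB (W * ρ * Wᴴ)).rank = n := by
    rw [hA_eq]
    have h1 : (((d : ℝ)⁻¹ : ℝ) : ℂ) • ptrB (W * (1 : Matrix (Fin d) (Fin d) ℂ) * Wᴴ)
        = ((((d : ℝ)⁻¹ : ℝ) : ℂ) • (1 : Matrix (Fin n) (Fin n) ℂ)) *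
          ptrB (W * (1 : Matrix (Fin d) (Fin d) ℂ) * Wᴴ) := by
      rw [Matrix.smul_mul, one_mul]
    rw [h1, Matrix.rank_mul_eq_right_of_isUnit_det]
    · exact hrank
    · rw [Matrix.det_smul, Matrix.det_one, mul_one]
      exact isUnit_iff_ne_zero.mpr (pow_ne_zero _ hdC)
  have hGle : ((m : ℂ) • 1 - ptrB (W * (1 : Matrix (Fin d) (Fin d) ℂ) * Wᴴ)).PosSemidef := by
    have heq : (m : ℂ) • (1 : Matrix (Fin n) (Fin n) ℂ) -
        ptrB (W * (1 : Matrix (Fin d) (Fin d) ℂ) * Wᴴ)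
        = ptrB (1 - W * Wᴴ) := by
      rw [ptrB_sub, ptrB_one, Matrix.mul_one]
    rw [heq]
    exact ptrB_posSemidef (one_sub_proj_posSemidef hW)
  have hβ : (0 : ℝ) ≤ (m : ℝ)⁻¹ - (d : ℝ)⁻¹ * m := by
    rw [sub_nonneg, inv_mul_eq_div, ← one_div]
    rw [div_le_div_iff₀ hdR hmR]
    have : (m : ℝ) * (m : ℝ) ≤ (d : ℝ) := by exact_mod_cast hm2d
    linarith
  have hAle : (((((m : ℝ)⁻¹ : ℝ)) : ℂ) • 1 - ptrB (W * ρ * Wᴴ)).PosSemidef := by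
    have hident : (((((m : ℝ)⁻¹ : ℝ)) : ℂ)) • (1 : Matrix (Fin n) (Fin n) ℂ) - ptrB (W * ρ * Wᴴ)
        = (((m : ℝ)⁻¹ - (d : ℝ)⁻¹ * m : ℝ) : ℂ) • 1 +
          (((d : ℝ)⁻¹ : ℝ) : ℂ) • ((m : ℂ) • 1 - ptrB (W * (1 : Matrix (Fin d) (Fin d) ℂ) * Wᴴ)) := by
      rw [hA_eq]
      ext i k
      simp only [Matrix.smul_apply, Matrix.sub_apply, Matrix.add_apply, Matrix.one_apply,
        smul_eq_mul]
      by_cases h : i = k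
      · simp only [h, if_pos rfl]
        push_cast
        ring
      · simp only [if_neg h]
        push_cast
        ring
    rw [hident]
    exact (posSemidef_realSmul Matrix.PosSemidef.one hβ).add
      (posSemidef_realSmul hGle (by positivity))
  exact vn_lt hm hmn hApsd hBpsd hAtr hBtr hArank hAle

/-! ### Swapping the factors -/

/-- The same isometry, with output and environment swapped. -/
noncomputable def swapIso {d n m : ℕ} (V : Matrix (Fin n × Fin m) (Fin d) ℂ) :
    Matrix (Fin m × Fin n) (Fin d) ℂ :=
  V.submatrix Prod.swap id

lemma swapIso_mul_conj {d n m : ℕ} (V : Matrix (Fin n × Fin m) (Fin d) ℂ)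
    (X : Matrix (Fin d) (Fin d) ℂ) (p q : Fin m × Fin n) :
    (swapIso V * X * (swapIso V)ᴴ) p q = (V * X * Vᴴ) p.swap q.swap := by
  simp only [swapIso, Matrix.mul_apply, Matrix.conjTranspose_apply, Matrix.submatrix_apply,
    id_eq]

lemma swapIso_isometry {d n m : ℕ} {V : Matrix (Fin n × Fin m) (Fin d) ℂ}
    (hV : Vᴴ * V = 1) : (swapIso V)ᴴ * swapIso V = 1 := by
  rw [← hV]
  ext c c'
  simp only [swapIso, Matrix.mul_apply, Matrix.conjTranspose_apply, Matrix.submatrix_apply,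
    id_eq]
  exact Fintype.sum_equiv (Equiv.prodComm (Fin m) (Fin n)) _ _ (fun p => rfl)

lemma ptrB_swapIso {d n m : ℕ} (V : Matrix (Fin n × Fin m) (Fin d) ℂ)
    (X : Matrix (Fin d) (Fin d) ℂ) :
    ptrB (swapIso V * X * (swapIso V)ᴴ) = ptrA (V * X * Vᴴ) := by
  ext j l
  simp only [ptrB, ptrA, Matrix.of_apply]
  exact Finset.sum_congr rfl fun i _ => swapIso_mul_conj V X (j, i) (l, i)

lemma ptrA_swapIso {d n m : ℕ} (V : Matrix (Fin n × Fin m) (Fin d) ℂ)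
    (X : Matrix (Fin d) (Fin d) ℂ) :
    ptrA (swapIso V * X * (swapIso V)ᴴ) = ptrB (V * X * Vᴴ) := by
  ext i k
  simp only [ptrB, ptrA, Matrix.of_apply]
  exact Finset.sum_congr rfl fun j _ => swapIso_mul_conj V X (j, i) (j, k)

end StinespringAux3

theorem stmt3 {d dOut dEnv : ℕ} (hd : 0 < d) (hOut : 0 < dOut) (hEnv : 0 < dEnv)
    (V : Matrix (Fin dOut × Fin dEnv) (Fin d) ℂ) (hV : Vᴴ * V = 1)
    (hminOut : (phiOut V 1).rank = dOut) (hminEnv : (phiEnv V 1).rank = dEnv) :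
    (dOut > dEnv → d > dOut * (dEnv - 1) →
      ∃ ρ : Matrix (Fin d) (Fin d) ℂ, ρ.PosSemidef ∧ ρ.trace = 1 ∧
        vnEntropy (phiOut V ρ) > vnEntropy (phiEnv V ρ)) ∧
    (dEnv > dOut → d > dEnv * (dOut - 1) →
      ∃ ρ : Matrix (Fin d) (Fin d) ℂ, ρ.PosSemidef ∧ ρ.trace = 1 ∧
        vnEntropy (phiEnv V ρ) > vnEntropy (phiOut V ρ)) := by
  classical
  open StinespringAux3 in
  have hdR : (0 : ℝ) < d := by exact_mod_cast hd
  have hρpsd : (((((d : ℝ)⁻¹ : ℝ) : ℂ)) • (1 : Matrix (Fin d) (Fin d) ℂ)).PosSemidef :=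
    StinespringAux3.posSemidef_realSmul Matrix.PosSemidef.one (by positivity)
  have hρtr : (((((d : ℝ)⁻¹ : ℝ) : ℂ)) • (1 : Matrix (Fin d) (Fin d) ℂ)).trace = 1 := by
    rw [Matrix.trace_smul, Matrix.trace_one, Fintype.card_fin, smul_eq_mul]
    rw [← Complex.ofReal_natCast, ← Complex.ofReal_mul, inv_mul_cancel₀ (ne_of_gt hdR)]
    norm_num
  have harith : ∀ n m : ℕ, m < n → d > n * (m - 1) → m * m ≤ d := by
    intro n m h1 h2
    rcases Nat.eq_zero_or_pos m with h | h
    · subst h; omega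
    · obtain ⟨e, rfl⟩ : ∃ e, m = e + 1 := ⟨m - 1, by omega⟩
      have he : e + 1 - 1 = e := by omega
      rw [he] at h2
      have h3 : (e + 2) * e ≤ n * e := Nat.mul_le_mul_right e (by omega)
      calc (e + 1) * (e + 1) = (e + 2) * e + 1 := by ring
        _ ≤ n * e + 1 := by omega
        _ ≤ d := h2
  constructor
  · intro h1 h2
    refine ⟨((((d : ℝ)⁻¹ : ℝ) : ℂ)) • 1, hρpsd, hρtr, ?_⟩
    have hrank : (StinespringAux3.ptrB (V * (1 : Matrix (Fin d) (Fin d) ℂ) * Vᴴ)).rank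
        = dOut := hminOut
    have := StinespringAux3.main_step hd hEnv h1 (harith dOut dEnv h1 h2) V hV hrank
    exact this
  · intro h1 h2
    refine ⟨((((d : ℝ)⁻¹ : ℝ) : ℂ)) • 1, hρpsd, hρtr, ?_⟩
    have hrank : (StinespringAux3.ptrB (StinespringAux3.swapIso V *
        (1 : Matrix (Fin d) (Fin d) ℂ) * (StinespringAux3.swapIso V)ᴴ)).rank = dEnv := by
      rw [StinespringAux3.ptrB_swapIso]
      exact hminEnv
    have hmain := StinespringAux3.main_step hd hOut h1 (harith dEnv dOut h1 h2)
      (StinespringAux3.swapIso V) (StinespringAux3.swapIso_isometry hV) hrank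
    rw [StinespringAux3.ptrA_swapIso, StinespringAux3.ptrB_swapIso] at hmain
    exact hmain
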